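/- For μ > 0 and |β| < μ, the double integral ∫_{(M,N): N>0, |M|<N} e^{-βM - μN} Z_n(M,N) dM dN equals (1/(μ+β) + 1/(μ-β))^n - (1/(μ+β))^n - (1/(μ-β))^n. -/

import Mathlib

open scoped Nat
open MeasureTheory Set Real Filter

lemma aux_integrable (m : ℕ) {r : ℝ} (hr : 0 < r) :
    IntegrableOn (fun t : ℝ => t ^ m * Real.exp (-(r * t))) (Set.Ioi 0) := by
  apply integrable_of_isBigO_exp_neg (b := r/2) (by linarith) (by fun_prop)
  rw [Asymptotics.isBigO_iff]
  refine ⟨(2/r)^m, ?_⟩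
  have h := (tendsto_pow_mul_exp_neg_atTop_nhds_zero m).comp
    (tendsto_id.const_mul_atTop (show (0:ℝ) < r/2 by linarith))
  have h2 : ∀ᶠ t : ℝ in atTop, (r/2*t)^m * Real.exp (-(r/2*t)) ≤ 1 := by
    filter_upwards [h.eventually (eventually_le_nhds (by norm_num : (0:ℝ) < 1))] with t ht
    exact ht
  filter_upwards [h2, eventually_ge_atTop (0:ℝ)] with t ht ht0
  have hrt : (0:ℝ) ≤ r/2*t := by positivity
  rw [Real.norm_eq_abs, Real.norm_eq_abs, abs_of_nonneg (by positivity),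
    abs_of_nonneg (by positivity)]
  have key : t ^ m * Real.exp (-(r * t)) =
      (2/r)^m * (((r/2*t)^m * Real.exp (-(r/2*t))) * Real.exp (-(r/2*t))) := by
    have he : Real.exp (-(r*t)) = Real.exp (-(r/2*t)) * Real.exp (-(r/2*t)) := by
      rw [← Real.exp_add]; ring_nf
    rw [he]
    have hr0 := hr.ne'
    rw [show t^m = (2/r)^m * (r/2*t)^m by rw [← mul_pow]; congr 1; field_simp]
    ring
  rw [key]
  have := mul_le_mul_of_nonneg_right ht (Real.exp_nonneg (-(r/2*t)))
  calc (2/r)^m * (((r/2*t)^m * Real.exp (-(r/2*t))) * Real.exp (-(r/2*t)))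
      ≤ (2/r)^m * (1 * Real.exp (-(r/2*t))) := by
        apply mul_le_mul_of_nonneg_left this (by positivity)
    _ = (2/r)^m * Real.exp (-(r/2) * t) := by ring_nf

lemma aux_integral (m : ℕ) {r : ℝ} (hr : 0 < r) :
    ∫ t in Set.Ioi (0:ℝ), t ^ m * Real.exp (-(r * t)) = (m ! : ℝ) / r ^ (m+1) := by
  have h := Real.integral_rpow_mul_exp_neg_mul_Ioi (a := (m:ℝ)+1) (r := r)
    (by positivity) hr
  rw [show ((m:ℝ)+1-1) = (m:ℝ) by ring] at h
  have heq : ∫ t in Set.Ioi (0:ℝ), t ^ m * Real.exp (-(r * t))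
      = ∫ t in Set.Ioi (0:ℝ), t ^ ((m:ℝ)) * Real.exp (-(r * t)) := by
    refine setIntegral_congr_fun measurableSet_Ioi (fun t ht => ?_)
    rw [Real.rpow_natCast]
  rw [heq, h, show ((m:ℝ)+1) = ((m+1 : ℕ):ℝ) by push_cast; ring,
    Real.rpow_natCast]
  push_cast
  rw [Real.Gamma_nat_eq_factorial, div_pow, one_pow]
  push_cast
  ring

lemma aux_binom (n : ℕ) (hn : 2 ≤ n) (a b : ℝ) :
    ∑ k ∈ Finset.Ico 1 n, (n.choose k : ℝ) * (a ^ k * b ^ (n - k)) =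
      (a + b) ^ n - a ^ n - b ^ n := by
  have h := add_pow a b n
  have h1 : Finset.range (n+1) = insert n (Finset.range n) := by
    rw [Finset.range_add_one]
  have h2 : Finset.range n = insert 0 (Finset.Ico 1 n) := by
    ext x; simp [Finset.mem_Ico]; omega
  rw [h1, Finset.sum_insert (by simp), h2,
    Finset.sum_insert (by simp)] at h
  simp only [Nat.choose_self, Nat.choose_zero_right, Nat.cast_one, pow_zero,
    Nat.sub_self, Nat.sub_zero, one_mul, mul_one] at h
  rw [h]
  have : ∑ k ∈ Finset.Ico 1 n, a ^ k * b ^ (n - k) * (n.choose k : ℝ) =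
      ∑ k ∈ Finset.Ico 1 n, (n.choose k : ℝ) * (a ^ k * b ^ (n - k)) := by
    apply Finset.sum_congr rfl; intros; ring
  rw [this]; ring

/-- The microcanonical partition function `Z_n(M,N)` of the orthoplicial model. -/
noncomputable def Zorth (n : ℕ) (M N : ℝ) : ℝ :=
  (1/2) * ∑ k ∈ Finset.Ico 1 n,
    (n.choose k : ℝ) * (((N + M)/2) ^ (k - 1) / ((k - 1)! : ℝ)) *
      (((N - M)/2) ^ (n - k - 1) / ((n - k - 1)! : ℝ))

/-- The Laplace transform of the microcanonical partition function over the cone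
`A = {(M,N) : N > 0, |M| < N}` gives the grand canonical partition function. -/
theorem laplace_Zorth (n : ℕ) (hn : 2 ≤ n) (β μ : ℝ) (hμ : 0 < μ) (hβ : |β| < μ) :
    ∫ p in {p : ℝ × ℝ | 0 < p.2 ∧ |p.1| < p.2},
        Real.exp (-β * p.1 - μ * p.2) * Zorth n p.1 p.2 =
      (1/(μ + β) + 1/(μ - β)) ^ n - (1/(μ + β)) ^ n - (1/(μ - β)) ^ n := by
  obtain ⟨hb1, hb2⟩ := abs_lt.mp hβ
  have hp : 0 < μ + β := by linarith
  have hq : 0 < μ - β := by linarith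
  set L : ℝ × ℝ →L[ℝ] ℝ × ℝ :=
    ((ContinuousLinearMap.fst ℝ ℝ ℝ) - (ContinuousLinearMap.snd ℝ ℝ ℝ)).prod
      ((ContinuousLinearMap.fst ℝ ℝ ℝ) + (ContinuousLinearMap.snd ℝ ℝ ℝ)) with hLdef
  have hL : ∀ u v : ℝ, L (u, v) = (u - v, u + v) := fun u v => rfl
  have himg : {p : ℝ × ℝ | 0 < p.2 ∧ |p.1| < p.2} = L '' (Ioi 0 ×ˢ Ioi 0) := by
    ext ⟨M, N⟩
    constructor
    · rintro ⟨hN, hM⟩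
      obtain ⟨hm1, hm2⟩ := abs_lt.mp hM
      simp only at hN hm1 hm2
      refine ⟨((N + M)/2, (N - M)/2), ⟨by simpa using by linarith, by simpa using by linarith⟩, ?_⟩
      rw [hL]
      simp only [Prod.mk.injEq]
      constructor <;> ring
    · rintro ⟨⟨u, v⟩, ⟨hu, hv⟩, h⟩
      rw [hL] at h
      simp only [mem_Ioi] at hu hv
      rw [← h]
      exact ⟨by simp; linarith, abs_lt.mpr ⟨by simp; linarith, by simp; linarith⟩⟩
  have hdet : L.det = 2 := by
    have hm : LinearMap.toMatrix (Module.Basis.finTwoProd ℝ) (Module.Basis.finTwoProd ℝ)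
        (L : ℝ × ℝ →ₗ[ℝ] ℝ × ℝ) = !![1, -1; 1, 1] := by
      ext i j
      fin_cases i <;> fin_cases j <;>
        simp [LinearMap.toMatrix_apply, Module.Basis.finTwoProd_zero, Module.Basis.finTwoProd_one,
          Module.Basis.coe_finTwoProd_repr, hLdef]
    show LinearMap.det (L : ℝ × ℝ →ₗ[ℝ] ℝ × ℝ) = 2
    rw [← LinearMap.det_toMatrix (Module.Basis.finTwoProd ℝ), hm, Matrix.det_fin_two_of]
    norm_num
  have hinj : Set.InjOn L (Ioi (0:ℝ) ×ˢ Ioi (0:ℝ)) := by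
    rintro ⟨u, v⟩ _ ⟨u', v'⟩ _ h
    rw [hL, hL, Prod.mk.injEq] at h
    obtain ⟨h1, h2⟩ := h
    have hu : u = u' := by linarith
    have hv : v = v' := by linarith
    simp [hu, hv]
  rw [himg, integral_image_eq_integral_abs_det_fderiv_smul volume
    (measurableSet_Ioi.prod measurableSet_Ioi)
    (fun x _ => L.hasFDerivAt.hasFDerivWithinAt) hinj]
  have hpt : ∀ x : ℝ × ℝ,
      |L.det| • (Real.exp (-β * (L x).1 - μ * (L x).2) * Zorth n (L x).1 (L x).2) =
      ∑ k ∈ Finset.Ico 1 n,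
        (n.choose k : ℝ) / (((k-1)! : ℝ) * ((n-k-1)! : ℝ)) *
          ((x.1 ^ (k-1) * Real.exp (-((μ+β) * x.1))) *
            (x.2 ^ (n-k-1) * Real.exp (-((μ-β) * x.2)))) := by
    rintro ⟨u, v⟩
    rw [hdet, hL]
    simp only [Zorth, smul_eq_mul]
    have e1 : ((u + v) + (u - v))/2 = u := by ring
    have e2 : ((u + v) - (u - v))/2 = v := by ring
    rw [e1, e2]
    have e3 : Real.exp (-β * (u - v) - μ * (u + v)) =
        Real.exp (-((μ+β) * u)) * Real.exp (-((μ-β) * v)) := by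
      rw [← Real.exp_add]; ring_nf
    rw [e3, show |(2:ℝ)| = 2 by norm_num]
    rw [Finset.mul_sum, Finset.mul_sum, Finset.mul_sum]
    apply Finset.sum_congr rfl
    intro k hk
    ring
  simp only [hpt]
  have hint : ∀ k ∈ Finset.Ico 1 n,
      Integrable (fun x : ℝ × ℝ =>
        (n.choose k : ℝ) / (((k-1)! : ℝ) * ((n-k-1)! : ℝ)) *
          ((x.1 ^ (k-1) * Real.exp (-((μ+β) * x.1))) *
            (x.2 ^ (n-k-1) * Real.exp (-((μ-β) * x.2)))))
        (volume.restrict (Ioi 0 ×ˢ Ioi 0)) := by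
    intro k hk
    rw [Measure.volume_eq_prod, ← Measure.prod_restrict]
    exact ((aux_integrable (k-1) hp).mul_prod (aux_integrable (n-k-1) hq)).const_mul _
  rw [integral_finset_sum _ hint]
  have hterm : ∀ k ∈ Finset.Ico 1 n,
      (∫ x : ℝ × ℝ in Ioi 0 ×ˢ Ioi 0,
        (n.choose k : ℝ) / (((k-1)! : ℝ) * ((n-k-1)! : ℝ)) *
          ((x.1 ^ (k-1) * Real.exp (-((μ+β) * x.1))) *
            (x.2 ^ (n-k-1) * Real.exp (-((μ-β) * x.2))))) =
      (n.choose k : ℝ) * ((1/(μ+β)) ^ k * (1/(μ-β)) ^ (n-k)) := by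
    intro k hk
    obtain ⟨hk1, hk2⟩ := Finset.mem_Ico.mp hk
    rw [Measure.volume_eq_prod, integral_const_mul,
      setIntegral_prod_mul (fun t : ℝ => t ^ (k-1) * Real.exp (-((μ+β) * t)))
        (fun t : ℝ => t ^ (n-k-1) * Real.exp (-((μ-β) * t))),
      aux_integral (k-1) hp, aux_integral (n-k-1) hq,
      show k - 1 + 1 = k by omega, show n - k - 1 + 1 = n - k by omega]
    have f1 : (((k-1)! : ℕ) : ℝ) ≠ 0 := Nat.cast_ne_zero.mpr (Nat.factorial_ne_zero _)
    have f2 : (((n-k-1)! : ℕ) : ℝ) ≠ 0 := Nat.cast_ne_zero.mpr (Nat.factorial_ne_zero _)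
    field_simp
    rw [one_div_pow, one_div_pow]; field_simp [hp.ne', hq.ne']
  rw [Finset.sum_congr rfl hterm]
  exact aux_binom n hn _ _
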